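/- Let M : A × A → ℕ have positive diagonal (M_{j,j} ≥ 1) and be primitive (some power Mⁿ has all entries positive). Let E ∈ ℝ and let h ∈ (closure of ℍ)^A with each Im h_j ≥ 0 satisfy h_j = -1/(E + Σ_k M_{j,k} h_k) for all j ∈ A, and suppose the lower bound |h_j| ≥ 1/(|E| + Σ_k M_{j,k}/√(M_{j,j})) > 0 holds for all j. Then either Im h_j > 0 for all j ∈ A, or Im h_j = 0 for all j ∈ A. -/

import Mathlib

open Complex

/-- Dichotomy for boundary fixed points: if `M` has positive diagonal and is
primitive, `E ∈ ℝ`, and `h` lies in the closed upper half-plane componentwise,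
satisfies the fixed point equation `h_j = -1/(E + Σ_k M_{j,k} h_k)` together with the
uniform lower bound `0 < 1/(|E| + Σ_k M_{j,k}/√(M_{j,j})) ≤ |h_j|`, then either all
components have strictly positive imaginary part, or all are real. -/
theorem boundary_fixed_point_dichotomy {A : Type*} [Fintype A] [Nonempty A]
    [DecidableEq A] (M : Matrix A A ℕ) (hMdiag : ∀ j, 1 ≤ M j j)
    (hMprim : ∃ n : ℕ, ∀ j k, 1 ≤ (M ^ n) j k)
    (E : ℝ) (h : A → ℂ) (hh : ∀ j, 0 ≤ (h j).im)
    (hfix : ∀ j, h j * ((E : ℂ) + ∑ k, (M j k : ℂ) * h k) = -1)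
    (hlow : ∀ j, 1 / (|E| + ∑ k, (M j k : ℝ) / Real.sqrt (M j j)) ≤ ‖h j‖)
    (hpos : ∀ j, 0 < 1 / (|E| + ∑ k, (M j k : ℝ) / Real.sqrt (M j j))) :
    (∀ j, 0 < (h j).im) ∨ (∀ j, (h j).im = 0) := by
  have habs : ∀ j, 0 < ‖h j‖ := fun j => lt_of_lt_of_le (hpos j) (hlow j)
  have hne : ∀ j, h j ≠ 0 := fun j => by
    intro h0; simpa [h0] using habs j
  -- key identity : Im h_j = normSq(h_j) * Σ_k M_{j,k} Im h_k
  have key : ∀ j, (h j).im = Complex.normSq (h j) * ∑ k, (M j k : ℝ) * (h k).im := by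
    intro j
    have e := congrArg (fun z => ((starRingEnd ℂ) (h j) * z).im) (hfix j)
    simp only [← mul_assoc] at e
    rw [Complex.conj_mul'] at e
    simpa [Complex.mul_im, Complex.add_im, Complex.im_sum, Finset.mul_sum, ← Complex.ofReal_pow,
      Complex.sq_norm] using e.symm
  -- step lemma
  have step : ∀ j k, 1 ≤ M j k → 0 < (h k).im → 0 < (h j).im := by
    intro j k hm hk
    rw [key j]
    apply mul_pos (Complex.normSq_pos.mpr (hne j))
    have : (0:ℝ) < (M j k : ℝ) * (h k).im := by
      apply mul_pos _ hk
      exact_mod_cast Nat.lt_of_lt_of_le Nat.zero_lt_one hm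
    apply Finset.sum_pos' _ ⟨k, Finset.mem_univ k, this⟩
    intro i _
    exact mul_nonneg (Nat.cast_nonneg _) (hh i)
  have prop : ∀ n : ℕ, ∀ j k, 1 ≤ (M ^ n) j k → 0 < (h k).im → 0 < (h j).im := by
    intro n
    induction n with
    | zero =>
      intro j k hm hk
      simp [Matrix.one_apply] at hm
      split_ifs at hm with hjk
      · subst hjk; exact hk
      · omega
    | succ m ih =>
      intro j k hm hk
      rw [pow_succ'] at hm
      have hs : (∑ l, M j l * (M ^ m) l k) ≠ 0 := by rw [← Matrix.mul_apply]; omega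
      obtain ⟨l, -, hl⟩ := Finset.exists_ne_zero_of_sum_ne_zero hs
      have h1 : 1 ≤ M j l := Nat.one_le_iff_ne_zero.mpr fun h0 => hl (by simp [h0])
      have h2 : 1 ≤ (M ^ m) l k := Nat.one_le_iff_ne_zero.mpr fun h0 => hl (by simp [h0])
      exact step j l h1 (ih l k h2 hk)
  obtain ⟨n, hn⟩ := hMprim
  by_cases hex : ∃ k, 0 < (h k).im
  · obtain ⟨k, hk⟩ := hex
    exact Or.inl fun j => prop n j k (hn j k) hk
  · exact Or.inr fun j => le_antisymm (not_lt.mp fun hc => hex ⟨j, hc⟩) (hh j)
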